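/- Let F be a field and r < n. Suppose R ∈ F[X₁,…,Xₙ] satisfies, for every u ∈ {0,1}ⁿ: R(u) = 0 if and only if wt(u) > r. If the statement of Hegedűs's theorem holds (any polynomial vanishing on all points of weight ≤ k but not on some point of weight > k has degree > k), then deg(R) ≥ n − r. -/
import Mathlib


/-- The weight of a point of the hypercube: the number of coordinates equal to 1. -/
noncomputable def wt {F : Type*} [Field F] {n : ℕ} (u : Fin n → F) : ℕ :=
  Nat.card {i : Fin n // u i = 1}

open MvPolynomial

lemma totalDegree_bind₁_le {F : Type*} [CommSemiring F] {n : ℕ}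
    (g : Fin n → MvPolynomial (Fin n) F) (hg : ∀ i, (g i).totalDegree ≤ 1)
    (p : MvPolynomial (Fin n) F) :
    (bind₁ g p).totalDegree ≤ p.totalDegree := by
  rw [bind₁, aeval_def, eval₂_eq]
  refine (totalDegree_finset_sum _ _).trans ?_
  apply Finset.sup_le
  intro d hd
  refine (totalDegree_mul _ _).trans ?_
  have h1 : (algebraMap F (MvPolynomial (Fin n) F) (coeff d p)).totalDegree = 0 := by
    simpa using totalDegree_C (R := F) (σ := Fin n) (coeff d p)
  rw [h1, zero_add]
  refine (totalDegree_finset_prod _ _).trans ?_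
  calc ∑ i ∈ d.support, ((g i) ^ d i).totalDegree ≤ ∑ i ∈ d.support, d i * 1 := by
        refine Finset.sum_le_sum fun i _ => ?_
        exact (totalDegree_pow _ _).trans (Nat.mul_le_mul_left _ (hg i))
    _ = d.sum fun _ e => e := by simp [Finsupp.sum]
    _ ≤ p.totalDegree := le_totalDegree hd

lemma eval_bind₁' {F : Type*} [Field F] {n : ℕ} (u : Fin n → F)
    (g : Fin n → MvPolynomial (Fin n) F) (p : MvPolynomial (Fin n) F) :
    eval u (bind₁ g p) = eval (fun i => eval u (g i)) p := by
  exact eval₂Hom_bind₁ _ _ _ _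

lemma wt_flip {F : Type*} [Field F] {n : ℕ} (u : Fin n → F)
    (hu : ∀ i, u i = 0 ∨ u i = 1) :
    wt (fun i => 1 - u i) = n - wt u := by
  have hiff : ∀ i, (1 - u i = 1) ↔ ¬ (u i = 1) := by
    intro i
    rcases hu i with h | h <;> simp [h]
  classical
  unfold wt
  simp only [Nat.card_eq_fintype_card]
  calc Fintype.card {i : Fin n // 1 - u i = 1}
      = Fintype.card {i : Fin n // ¬ (u i = 1)} := Fintype.card_congr
        (Equiv.subtypeEquivRight hiff)
    _ = n - Fintype.card {i : Fin n // u i = 1} := by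
        rw [Fintype.card_subtype_compl]; simp

lemma wt_le {F : Type*} [Field F] {n : ℕ} (u : Fin n → F) : wt u ≤ n := by
  classical
  unfold wt
  simp only [Nat.card_eq_fintype_card]
  simpa using Fintype.card_subtype_le (fun i : Fin n => u i = 1)

theorem hegedus_implies_sziklai_weiner {F : Type*} [Field F] {n r : ℕ} (hr : r < n)
    (R : MvPolynomial (Fin n) F)
    (hR : ∀ u : Fin n → F, (∀ i, u i = 0 ∨ u i = 1) →
      (MvPolynomial.eval u R = 0 ↔ r < wt u))
    (hegedus : ∀ (k : ℕ) (P : MvPolynomial (Fin n) F),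
      (∀ u : Fin n → F, (∀ i, u i = 0 ∨ u i = 1) → wt u ≤ k →
        MvPolynomial.eval u P = 0) →
      (∃ v : Fin n → F, (∀ i, v i = 0 ∨ v i = 1) ∧ k < wt v ∧
        MvPolynomial.eval v P ≠ 0) →
      k < P.totalDegree) :
    n - r ≤ R.totalDegree := by
  set g : Fin n → MvPolynomial (Fin n) F := fun i => 1 - X i with hg
  set P : MvPolynomial (Fin n) F := bind₁ g R with hP
  have heval : ∀ u : Fin n → F, eval u P = eval (fun i => 1 - u i) R := by
    intro u
    rw [hP, eval_bind₁']
    simp [hg]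
  have hmain : n - r - 1 < P.totalDegree := by
    apply hegedus
    · intro u hu hwt
      rw [heval]
      rw [hR _ (fun i => by rcases hu i with h | h <;> simp [h])]
      rw [wt_flip u hu]
      have := wt_le u
      omega
    · refine ⟨fun _ => 1, fun i => Or.inr rfl, ?_, ?_⟩
      · have : wt (fun _ : Fin n => (1 : F)) = n := by
          unfold wt
          rw [Nat.card_congr (Equiv.subtypeUnivEquiv (fun i => rfl))]
          simp
        omega
      · rw [heval]
        intro h
        rw [hR _ (fun i => by norm_num)] at h
        have : wt (fun _ : Fin n => (1 : F) - 1) = 0 := by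
          classical
          unfold wt
          simp
        omega
  have hdeg : P.totalDegree ≤ R.totalDegree := by
    apply totalDegree_bind₁_le
    intro i
    refine (totalDegree_sub _ _).trans ?_
    simp
  omega
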